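/- Let H(s) be a C¹ family of bounded self-adjoint operators with smooth rank-one spectral projection P(s) at eigenvalue 0, such that the spectral measure μ_{φ(s)} of the vector φ(s) = Ṗ(s)ψ(s) (where ψ(s) spans Range P(s)) has no atom at 0 for each s, uniformly continuously in s. Then with Y_Δ(s) = −g(H(s)/Δ)Ṗ(s)P(s) + P(s)Ṗ(s)g(H(s)/Δ), g(x)=exp(−πx²), one has sup_{s∈[0,1]} ‖Y_Δ(s)P(s)‖ → 0 as Δ → 0⁺. -/

import Mathlib

open MeasureTheory Real Filter
open scoped InnerProductSpace

section Aux
variable {E : Type*} [NormedAddCommGroup E] [InnerProductSpace ℂ E] [CompleteSpace E]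



lemma aeval_apply_eigen (a : E →L[ℂ] E) (v : E) (hv : a v = 0) (p : Polynomial ℝ) :
    (Polynomial.aeval a p) v = p.eval 0 • v := by
  induction p using Polynomial.induction_on with
  | C r => simp [Polynomial.aeval_C, Algebra.algebraMap_eq_smul_one]
  | add p q hp hq => simp [hp, hq, add_smul]
  | monomial n r h =>
    have hpow : (a ^ (n + 1)) v = 0 := by
      induction n with
      | zero => simpa [pow_one] using hv
      | succ m ih =>
        rw [pow_succ, ContinuousLinearMap.mul_apply, hv]
        simp
    simp [Polynomial.aeval_C, Algebra.algebraMap_eq_smul_one, map_mul, map_pow,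
      ContinuousLinearMap.mul_apply, hpow, ContinuousLinearMap.smul_apply]

lemma cfc_apply_eigen_zero [Nontrivial E] (a : E →L[ℂ] E) (ha : IsSelfAdjoint a) (v : E)
    (hv : a v = 0) (h0 : (0 : ℝ) ∈ spectrum ℝ a)
    (f : ℝ → ℝ) (hf : Continuous f) : cfc f a v = f 0 • v := by
  have hsub : spectrum ℝ a ⊆ Set.Icc (-‖a‖) ‖a‖ := by
    intro x hx
    have h := spectrum.norm_le_norm_of_mem hx
    rw [Real.norm_eq_abs] at h
    exact abs_le.mp h
  have key : ∀ ε : ℝ, 0 < ε → ‖cfc f a v - f 0 • v‖ ≤ 2 * ε * ‖v‖ := by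
    intro ε hε
    obtain ⟨p, hp⟩ := exists_polynomial_near_of_continuousOn (-‖a‖) ‖a‖ f
      (hf.continuousOn) ε hε
    have h0' : (0 : ℝ) ∈ Set.Icc (-‖a‖) ‖a‖ := hsub h0
    have hcfcp : cfc p.eval a v = p.eval 0 • v := by
      rw [cfc_polynomial p a]; exact aeval_apply_eigen a v hv p
    have hdiff : ‖cfc f a - cfc p.eval a‖ ≤ ε := by
      rw [← cfc_sub (a := a) (f := f) (g := fun x => p.eval x) hf.continuousOn
        (Polynomial.continuousOn _)]
      refine norm_cfc_le hε.le fun x hx => ?_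
      rw [Real.norm_eq_abs, abs_sub_comm]
      exact (hp x (hsub hx)).le
    calc ‖cfc f a v - f 0 • v‖
        = ‖(cfc f a - cfc p.eval a) v + (p.eval 0 - f 0) • v‖ := by
          rw [ContinuousLinearMap.sub_apply, hcfcp, sub_smul]
          ring_nf
          congr 1
          abel
      _ ≤ ‖(cfc f a - cfc p.eval a) v‖ + ‖(p.eval 0 - f 0) • v‖ := norm_add_le _ _
      _ ≤ ε * ‖v‖ + ε * ‖v‖ := by
          gcongr
          · exact le_trans ((cfc f a - cfc p.eval a).le_opNorm v) (by gcongr)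
          · rw [norm_smul, Real.norm_eq_abs, abs_sub_comm]
            gcongr
            rw [abs_sub_comm]
            exact (hp 0 h0').le
      _ = 2 * ε * ‖v‖ := by ring
  have : ‖cfc f a v - f 0 • v‖ ≤ 0 := by
    by_contra hlt
    push_neg at hlt
    rcases eq_or_ne v 0 with rfl | hv0
    · simp at hlt
    · have hv' : 0 < ‖v‖ := norm_pos_iff.mpr hv0
      have hk := key (‖cfc f a v - f 0 • v‖ / (4 * ‖v‖)) (by positivity)
      have h2 : 2 * (‖cfc f a v - f 0 • v‖ / (4 * ‖v‖)) * ‖v‖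
          = ‖cfc f a v - f 0 • v‖ / 2 := by
        field_simp
        ring
      rw [h2] at hk
      linarith
  rw [← sub_eq_zero]
  exact norm_le_zero_iff.mp this


lemma zero_mem_spec (a : E →L[ℂ] E) (v : E) (hv : a v = 0) (hv0 : v ≠ 0) :
    (0 : ℝ) ∈ spectrum ℝ a := by
  rw [spectrum.mem_iff]
  intro hU
  rw [map_zero, zero_sub] at hU
  obtain ⟨u, hu⟩ := hU
  have h1 : (↑u⁻¹ * ↑u : E →L[ℂ] E) v = v := by rw [u.inv_mul]; rfl
  rw [ContinuousLinearMap.mul_apply, hu, ContinuousLinearMap.neg_apply, hv] at h1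
  apply hv0
  simpa using h1.symm


end Aux

/-- Uniform vanishing of `Y_Δ P`: for a `C¹` family of bounded self-adjoint
operators `H(s)` with rank-one spectral projections `P(s)` at eigenvalue `0`
spanned by unit vectors `ψ(s)`, if the spectral measures `μ_s` of the vectors
`φ(s) = Ṗ(s)ψ(s)` have no atom at `0`, uniformly continuously in `s` (each
regularized integral is continuous in `s`), then with
`Y_Δ(s) = −g(H(s)/Δ)Ṗ(s)P(s) + P(s)Ṗ(s)g(H(s)/Δ)`, `g(x) = e^{−πx²}`,
one has `sup_{s∈[0,1]} ‖Y_Δ(s)P(s)‖ → 0` as `Δ → 0⁺`. -/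
theorem stmt_13 {E : Type*} [NormedAddCommGroup E] [InnerProductSpace ℂ E]
    [CompleteSpace E]
    (H H' P P' : ℝ → E →L[ℂ] E) (ψ : ℝ → E) (μ : ℝ → Measure ℝ)
    (hHsa : ∀ s, IsSelfAdjoint (H s))
    (hHderiv : ∀ s, HasDerivAt H (H' s) s) (hH'cont : Continuous H')
    (hPderiv : ∀ s, HasDerivAt P (P' s) s) (hP'cont : Continuous P')
    (hψ : ∀ s, ‖ψ s‖ = 1) (hHψ : ∀ s, H s (ψ s) = 0)
    (hP : ∀ s, ∀ x, P s x = ⟪ψ s, x⟫_ℂ • ψ s)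
    (hμfin : ∀ s, IsFiniteMeasure (μ s))
    (hspec : ∀ s, ∀ f : ℝ → ℝ, Continuous f →
      ⟪P' s (ψ s), cfc f (H s) (P' s (ψ s))⟫_ℂ = ((∫ x, f x ∂(μ s) : ℝ) : ℂ))
    (hatom : ∀ s ∈ Set.Icc (0 : ℝ) 1, μ s {0} = 0)
    (hcont : ∀ Δ : ℝ, 0 < Δ →
      ContinuousOn (fun s => ∫ x, Real.exp (-π * (x / Δ) ^ 2) ^ 2 ∂(μ s))
        (Set.Icc (0 : ℝ) 1)) :
    Tendsto (fun Δ : ℝ => ⨆ s : Set.Icc (0 : ℝ) 1,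
        ‖(-(cfc (fun x : ℝ => Real.exp (-π * (x / Δ) ^ 2)) (H (s : ℝ)) * (P' s * P s))
            + P s * P' s * cfc (fun x : ℝ => Real.exp (-π * (x / Δ) ^ 2)) (H (s : ℝ)))
          * P s‖)
      (nhdsWithin 0 (Set.Ioi 0)) (nhds 0) := by
  haveI hNT : Nontrivial E := nontrivial_of_ne (ψ 0) 0
    (fun h => by simpa [h] using hψ 0)
  have hψ0 : ∀ s, ψ s ≠ 0 := fun s h => by simpa [h] using hψ s
  have hψψ : ∀ s, ⟪ψ s, ψ s⟫_ℂ = 1 := fun s => by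
    rw [inner_self_eq_norm_sq_to_K, hψ]; norm_num
  have hPψ : ∀ s, P s (ψ s) = ψ s := fun s => by
    rw [hP, hψψ, one_smul]
  have hPPfun : (fun t => P t * P t) = P := by
    funext t
    ext x
    simp only [ContinuousLinearMap.mul_apply, hP, inner_smul_right, hψψ, mul_one,
      smul_smul]
  have hP'eq : ∀ s, P' s * P s + P s * P' s = P' s := fun s => by
    have h1 : HasDerivAt (fun t => P t * P t) (P' s * P s + P s * P' s) s :=
      (hPderiv s).mul (hPderiv s)
    rw [hPPfun] at h1
    exact h1.unique (hPderiv s)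
  have hPφ : ∀ s, P s (P' s (ψ s)) = 0 := fun s => by
    have h := congrArg (fun A : E →L[ℂ] E => A (ψ s)) (hP'eq s)
    simp only [ContinuousLinearMap.add_apply, ContinuousLinearMap.mul_apply, hPψ] at h
    exact add_eq_left.mp h
  -- the spectral integral
  set G : ℝ → ℝ → ℝ := fun Δ s => ∫ x, Real.exp (-π * (x / Δ) ^ 2) ^ 2 ∂(μ s) with hGdef
  have hgc : ∀ Δ : ℝ, Continuous (fun x : ℝ => Real.exp (-π * (x / Δ) ^ 2)) := by
    intro Δ; fun_prop
  have hg1 : ∀ Δ x : ℝ, Real.exp (-π * (x / Δ) ^ 2) ^ 2 ≤ 1 := by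
    intro Δ x
    have h1 : Real.exp (-π * (x / Δ) ^ 2) ≤ 1 := by
      rw [Real.exp_le_one_iff]
      have := sq_nonneg (x / Δ)
      nlinarith [Real.pi_pos]
    exact pow_le_one₀ (Real.exp_nonneg _) h1
  have hint : ∀ Δ s : ℝ, Integrable (fun x => Real.exp (-π * (x / Δ) ^ 2) ^ 2) (μ s) := by
    intro Δ s
    haveI := hμfin s
    refine ⟨((hgc Δ).pow 2).aestronglyMeasurable, HasFiniteIntegral.of_bounded (C := 1)
      (ae_of_all _ fun x => ?_)⟩
    rw [Real.norm_eq_abs, abs_of_nonneg (by positivity)]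
    exact hg1 Δ x
  have hmono : ∀ s Δ₁ Δ₂ : ℝ, 0 < Δ₁ → Δ₁ ≤ Δ₂ → G Δ₁ s ≤ G Δ₂ s := by
    intro s Δ₁ Δ₂ h1 h12
    refine integral_mono (hint Δ₁ s) (hint Δ₂ s) fun x => ?_
    dsimp only
    have hq : (x / Δ₂) ^ 2 ≤ (x / Δ₁) ^ 2 := by
      rw [div_pow, div_pow]
      exact div_le_div_of_nonneg_left (sq_nonneg x) (by positivity)
        (by nlinarith)
    have hpi := Real.pi_pos
    have hle : Real.exp (-π * (x / Δ₁) ^ 2) ≤ Real.exp (-π * (x / Δ₂) ^ 2) := by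
      apply Real.exp_le_exp.mpr; nlinarith
    exact pow_le_pow_left₀ (Real.exp_nonneg _) hle 2
  have hGnn : ∀ Δ s : ℝ, 0 ≤ G Δ s := fun Δ s =>
    integral_nonneg fun x => by positivity
  -- pointwise vanishing
  have hlim : ∀ s ∈ Set.Icc (0 : ℝ) 1,
      Tendsto (fun Δ => G Δ s) (nhdsWithin 0 (Set.Ioi 0)) (nhds 0) := by
    intro s hs
    haveI := hμfin s
    have hx : ∀ x : ℝ, x ≠ 0 →
        Tendsto (fun Δ => Real.exp (-π * (x / Δ) ^ 2) ^ 2)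
          (nhdsWithin 0 (Set.Ioi 0)) (nhds 0) := by
      intro x hx0
      have hΔ2 : Tendsto (fun Δ : ℝ => Δ ^ 2) (nhdsWithin 0 (Set.Ioi 0))
          (nhdsWithin 0 (Set.Ioi 0)) := by
        rw [tendsto_nhdsWithin_iff]
        constructor
        · simpa using ((continuous_pow 2).tendsto (0 : ℝ)).mono_left
            (nhdsWithin_le_nhds (s := Set.Ioi (0:ℝ)))
        · filter_upwards [self_mem_nhdsWithin] with Δ hΔ
          exact pow_pos (show 0 < Δ from hΔ) 2
      have hinv : Tendsto (fun Δ : ℝ => (Δ ^ 2)⁻¹) (nhdsWithin 0 (Set.Ioi 0)) atTop :=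
        hΔ2.inv_tendsto_nhdsGT_zero
      have hsq : Tendsto (fun Δ : ℝ => (x / Δ) ^ 2) (nhdsWithin 0 (Set.Ioi 0)) atTop := by
        have := hinv.const_mul_atTop (show (0:ℝ) < x ^ 2 by positivity)
        refine this.congr fun Δ => ?_
        rw [div_pow, div_eq_mul_inv]
      have hexp : Tendsto (fun Δ : ℝ => Real.exp (-π * (x / Δ) ^ 2))
          (nhdsWithin 0 (Set.Ioi 0)) (nhds 0) := by
        refine Real.tendsto_exp_atBot.comp ?_
        exact hsq.const_mul_atTop_of_neg (neg_lt_zero.mpr Real.pi_pos)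
      have := hexp.pow 2
      simpa using this
    have hae : ∀ᵐ x ∂(μ s), Tendsto (fun Δ => Real.exp (-π * (x / Δ) ^ 2) ^ 2)
        (nhdsWithin (0:ℝ) (Set.Ioi 0)) (nhds ((fun _ : ℝ => (0:ℝ)) x)) := by
      rw [ae_iff]
      refine measure_mono_null ?_ (hatom s hs)
      intro x hxmem
      simp only [Set.mem_setOf_eq] at hxmem
      by_contra hne
      exact hxmem (hx x hne)
    have hmain := tendsto_integral_filter_of_dominated_convergence
      (μ := μ s) (F := fun Δ x => Real.exp (-π * (x / Δ) ^ 2) ^ 2)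
      (f := fun _ : ℝ => (0:ℝ)) (l := nhdsWithin (0:ℝ) (Set.Ioi 0))
      (fun _ => (1 : ℝ))
      (Eventually.of_forall fun Δ => ((hgc Δ).pow 2).aestronglyMeasurable)
      (Eventually.of_forall fun Δ => ae_of_all _ fun x => by
        rw [Real.norm_eq_abs, abs_of_nonneg (by positivity)]; exact hg1 Δ x)
      (integrable_const 1) hae
    simpa [hGdef] using hmain
  -- uniform smallness at a single scale (Dini-type compactness argument)
  have step13 : ∀ ε : ℝ, 0 < ε → ∃ Δ₀ : ℝ, 0 < Δ₀ ∧
      ∀ s ∈ Set.Icc (0 : ℝ) 1, G Δ₀ s < ε := by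
    intro ε hε
    have hchoice : ∀ s ∈ Set.Icc (0 : ℝ) 1, ∃ D : ℝ, 0 < D ∧ G D s < ε / 2 := by
      intro s hs
      have h1 : ∀ᶠ Δ in nhdsWithin (0:ℝ) (Set.Ioi 0), G Δ s < ε / 2 :=
        (hlim s hs).eventually_lt_const (by linarith)
      obtain ⟨Δ, hΔlt, hΔmem⟩ := (h1.and self_mem_nhdsWithin).exists
      exact ⟨Δ, hΔmem, hΔlt⟩
    choose! Ds hDpos hDlt using hchoice
    have hnb : ∀ s ∈ Set.Icc (0 : ℝ) 1, ∃ U : Set ℝ, IsOpen U ∧ s ∈ U ∧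
        ∀ t ∈ U ∩ Set.Icc (0 : ℝ) 1, G (Ds s) t < ε := by
      intro s hs
      have hc : ContinuousWithinAt (fun t => G (Ds s) t) (Set.Icc (0 : ℝ) 1) s :=
        (hcont (Ds s) (hDpos s hs)) s hs
      have hev : ∀ᶠ t in nhdsWithin s (Set.Icc (0 : ℝ) 1), G (Ds s) t < ε :=
        hc.eventually_lt_const (lt_of_lt_of_le (hDlt s hs) (by linarith))
      rw [eventually_nhdsWithin_iff] at hev
      obtain ⟨U, hUsub, hUopen, hUmem⟩ := eventually_nhds_iff.mp hev
      exact ⟨U, hUopen, hUmem, fun t ⟨htU, htI⟩ => hUsub t htU htI⟩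
    choose! U hUopen hUmem hUlt using hnb
    obtain ⟨t, hcov⟩ := (isCompact_Icc : IsCompact (Set.Icc (0 : ℝ) 1)).elim_nhds_subcover'
      (fun s hs => U s) (fun s hs => (hUopen s hs).mem_nhds (hUmem s hs))
    have hne : t.Nonempty := by
      rcases Finset.eq_empty_or_nonempty t with rfl | h
      · exfalso
        have := hcov (Set.left_mem_Icc.mpr (by norm_num))
        simpa using this
      · exact h
    refine ⟨t.inf' hne (fun x => Ds ↑x), ?_, ?_⟩
    · rw [Finset.lt_inf'_iff]
      exact fun b hb => hDpos ↑b b.2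
    · intro s hs
      obtain ⟨x, hxt, hsU⟩ := Set.mem_iUnion₂.mp (hcov hs)
      calc G (t.inf' hne (fun x => Ds ↑x)) s ≤ G (Ds ↑x) s := by
            refine hmono s _ _ ?_ (Finset.inf'_le _ hxt)
            rw [Finset.lt_inf'_iff]
            exact fun b hb => hDpos ↑b b.2
        _ < ε := hUlt ↑x x.2 s ⟨hsU, hs⟩
  -- key operator-norm estimate
  have key : ∀ Δ : ℝ, 0 < Δ → ∀ s : ℝ,
      ‖(-(cfc (fun x : ℝ => Real.exp (-π * (x / Δ) ^ 2)) (H s) * (P' s * P s))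
          + P s * P' s * cfc (fun x : ℝ => Real.exp (-π * (x / Δ) ^ 2)) (H s)) * P s‖ ^ 2
        ≤ G Δ s := by
    intro Δ hΔ s
    set A := cfc (fun x : ℝ => Real.exp (-π * (x / Δ) ^ 2)) (H s) with hA
    set φ := P' s (ψ s) with hφ
    have hAψ : A (ψ s) = ψ s := by
      rw [hA, cfc_apply_eigen_zero (H s) (hHsa s) (ψ s) (hHψ s)
        (zero_mem_spec (H s) (ψ s) (hHψ s) (hψ0 s)) _ (hgc Δ)]
      norm_num
    have hAsa : IsSelfAdjoint A := cfc_predicate _ _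
    have hsym := ContinuousLinearMap.isSelfAdjoint_iff_isSymmetric.mp hAsa
    have hnorm2 : ‖A φ‖ ^ 2 = G Δ s := by
      have h1 : ⟪A φ, A φ⟫_ℂ = ⟪φ, A (A φ)⟫_ℂ := hsym φ (A φ)
      have h2 : cfc (fun x : ℝ => Real.exp (-π * (x / Δ) ^ 2) ^ 2) (H s) φ = A (A φ) := by
        rw [cfc_pow (fun x : ℝ => Real.exp (-π * (x / Δ) ^ 2)) 2 (H s)
          ((hgc Δ).continuousOn) (hHsa s), pow_two, ContinuousLinearMap.mul_apply]
      have h3 := hspec s (fun x => Real.exp (-π * (x / Δ) ^ 2) ^ 2) ((hgc Δ).pow 2)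
      rw [← hφ, h2] at h3
      have h5 := inner_self_eq_norm_sq (𝕜 := ℂ) (A φ)
      rw [h1, h3] at h5
      simpa [hGdef] using h5.symm
    have hφP : ∀ x : E,
        ((-(A * (P' s * P s)) + P s * P' s * A) * P s) x = ⟪ψ s, x⟫_ℂ • (-(A φ)) := by
      intro x
      have hPx : P s x = ⟪ψ s, x⟫_ℂ • ψ s := hP s x
      simp only [ContinuousLinearMap.mul_apply, ContinuousLinearMap.add_apply,
        ContinuousLinearMap.neg_apply, hPx, _root_.map_smul, hPψ, hAψ, hPφ, ← hφ, show P s φ = 0 from hPφ s, smul_zero,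
        add_zero, smul_neg]
    have hopn : ‖(-(A * (P' s * P s)) + P s * P' s * A) * P s‖ ≤ ‖A φ‖ := by
      refine ContinuousLinearMap.opNorm_le_bound _ (norm_nonneg _) fun x => ?_
      rw [hφP x, norm_smul, norm_neg]
      calc ‖⟪ψ s, x⟫_ℂ‖ * ‖A φ‖ ≤ (‖ψ s‖ * ‖x‖) * ‖A φ‖ := by
            gcongr
            exact norm_inner_le_norm _ _
        _ = ‖A φ‖ * ‖x‖ := by rw [hψ s]; ring
    calc ‖(-(A * (P' s * P s)) + P s * P' s * A) * P s‖ ^ 2 ≤ ‖A φ‖ ^ 2 :=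
          pow_le_pow_left₀ (norm_nonneg _) hopn 2
      _ = G Δ s := hnorm2
  -- conclusion
  haveI : Nonempty ↥(Set.Icc (0:ℝ) 1) := ⟨⟨0, Set.left_mem_Icc.mpr (by norm_num)⟩⟩
  rw [Metric.tendsto_nhdsWithin_nhds]
  intro ε hε
  obtain ⟨Δ₀, hΔ₀pos, hΔ₀lt⟩ := step13 ((ε / 2) ^ 2) (by positivity)
  refine ⟨Δ₀, hΔ₀pos, fun {Δ} hΔmem hΔd => ?_⟩
  have hΔpos : 0 < Δ := hΔmem
  have hΔle : Δ ≤ Δ₀ := by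
    rw [Real.dist_eq, sub_zero, abs_of_pos hΔpos] at hΔd
    linarith
  rw [Real.dist_eq, sub_zero, abs_of_nonneg (Real.iSup_nonneg fun s => norm_nonneg _)]
  refine lt_of_le_of_lt (ciSup_le fun s => ?_) (show ε / 2 < ε by linarith)
  have hkey := key Δ hΔpos ↑s
  have hmle : G Δ (↑s : ℝ) ≤ G Δ₀ ↑s := hmono ↑s Δ Δ₀ hΔpos hΔle
  have h2 : ‖(-(cfc (fun x : ℝ => Real.exp (-π * (x / Δ) ^ 2)) (H (↑s : ℝ))
        * (P' ↑s * P ↑s)) + P ↑s * P' ↑s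
        * cfc (fun x : ℝ => Real.exp (-π * (x / Δ) ^ 2)) (H (↑s : ℝ))) * P ↑s‖ ^ 2
      < (ε / 2) ^ 2 :=
    lt_of_le_of_lt (hkey.trans hmle) (hΔ₀lt ↑s s.2)
  exact le_of_lt (lt_of_pow_lt_pow_left₀ 2 (by positivity) h2)
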